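/- If α ≤ 2, α ≠ 0, and |δ| ≤ 1/α², then for all u₁ ≤ u₂ and v₁ ≤ v₂ in [0,1], C(u₂,v₂) - C(u₁,v₂) - C(u₂,v₁) + C(u₁,v₁) ≥ 0, where C(u,v) = uv + δ·(1 - exp(α(u-u²)))·(1 - exp(α(v-v²))) (i.e., C is 2-increasing). -/

import Mathlib

private lemma key_ineq (α : ℝ) (hα2 : α ≤ 2) {u : ℝ} (hu : u ∈ Set.Icc (0:ℝ) 1) :
    |1 - 2*u| * Real.exp (α * (u - u^2)) ≤ 1 := by
  obtain ⟨h0, h1⟩ := hu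
  set t : ℝ := 1 - 2*u with ht
  have huu : 0 ≤ u - u^2 := by nlinarith
  have h2 : α * (u - u^2) ≤ (1 - t^2)/2 := by
    have : t^2 = 1 - 4*(u - u^2) := by ring
    nlinarith
  have h3 : Real.exp (α * (u - u^2)) ≤ Real.exp ((1 - t^2)/2) :=
    Real.exp_le_exp.mpr h2
  have h4 : |t| ≤ Real.exp ((t^2 - 1)/2) := by
    have := Real.add_one_le_exp ((t^2 - 1)/2)
    have hsq : (|t| - 1)^2 ≥ 0 := sq_nonneg _
    have : (1 + t^2)/2 ≤ Real.exp ((t^2 - 1)/2) := by linarith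
    have h5 : |t| ≤ (1 + t^2)/2 := by nlinarith [sq_abs t]
    linarith
  calc |t| * Real.exp (α * (u - u^2))
      ≤ Real.exp ((t^2 - 1)/2) * Real.exp ((1 - t^2)/2) := by
        apply mul_le_mul h4 h3 (Real.exp_pos _).le (Real.exp_nonneg _)
    _ = 1 := by rw [← Real.exp_add, show (t^2-1)/2 + (1-t^2)/2 = 0 by ring, Real.exp_zero]

private lemma lip (α : ℝ) (hα2 : α ≤ 2) {x y : ℝ}
    (hx : x ∈ Set.Icc (0:ℝ) 1) (hy : y ∈ Set.Icc (0:ℝ) 1) :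
    |(1 - Real.exp (α * (y - y^2))) - (1 - Real.exp (α * (x - x^2)))| ≤ |α| * |y - x| := by
  set g : ℝ → ℝ := fun u => 1 - Real.exp (α * (u - u^2)) with hg
  set g' : ℝ → ℝ := fun u => -(Real.exp (α * (u - u^2)) * (α * (1 - 2*u))) with hg'
  have hderiv : ∀ u ∈ Set.Icc (0:ℝ) 1, HasDerivWithinAt g (g' u) (Set.Icc 0 1) u := by
    intro u _
    have h1 : HasDerivAt (fun u : ℝ => α * (u - u^2)) (α * (1 - 2*u)) u := by
      have : HasDerivAt (fun u : ℝ => u - u^2) (1 - 2*u) u := by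
        exact (hasDerivAt_id u).sub ((hasDerivAt_pow 2 u).congr_deriv (by norm_num))
      simpa using this.const_mul α
    have h2 : HasDerivAt (fun u : ℝ => Real.exp (α * (u - u^2)))
        (Real.exp (α * (u - u^2)) * (α * (1 - 2*u))) u := (Real.hasDerivAt_exp _).comp u h1
    have h3 := ((hasDerivAt_const u (1:ℝ)).sub h2).hasDerivWithinAt (s := Set.Icc 0 1)
    have : (0:ℝ) - Real.exp (α * (u - u^2)) * (α * (1 - 2*u)) = g' u := by simp [g']
    rw [this] at h3
    exact h3
  have hbound : ∀ u ∈ Set.Icc (0:ℝ) 1, ‖g' u‖ ≤ |α| := by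
    intro u hu
    have := key_ineq α hα2 hu
    have hexp : 0 ≤ Real.exp (α * (u - u^2)) := Real.exp_nonneg _
    calc ‖g' u‖ = Real.exp (α * (u - u^2)) * (|α| * |1 - 2*u|) := by
          simp [g', abs_mul, abs_of_nonneg hexp]
      _ = |α| * (|1 - 2*u| * Real.exp (α * (u - u^2))) := by ring
      _ ≤ |α| * 1 := by
          apply mul_le_mul_of_nonneg_left this (abs_nonneg α)
      _ = |α| := by ring
  have := (convex_Icc (0:ℝ) 1).norm_image_sub_le_of_norm_hasDerivWithin_le
      hderiv hbound hx hy
  simpa only [Real.norm_eq_abs, g] using this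

theorem stmt_8 (α δ : ℝ) (hα2 : α ≤ 2) (hα0 : α ≠ 0) (hδ : |δ| ≤ 1/α^2)
    (C : ℝ → ℝ → ℝ)
    (hC : ∀ u v, C u v = u*v + δ * (1 - Real.exp (α * (u - u^2))) * (1 - Real.exp (α * (v - v^2)))) :
    ∀ u₁ ∈ Set.Icc (0:ℝ) 1, ∀ u₂ ∈ Set.Icc (0:ℝ) 1, ∀ v₁ ∈ Set.Icc (0:ℝ) 1, ∀ v₂ ∈ Set.Icc (0:ℝ) 1,
      u₁ ≤ u₂ → v₁ ≤ v₂ →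
      C u₂ v₂ - C u₁ v₂ - C u₂ v₁ + C u₁ v₁ ≥ 0 := by
  intro u₁ hu₁ u₂ hu₂ v₁ hv₁ v₂ hv₂ hu hv
  set Eu : ℝ := (1 - Real.exp (α * (u₂ - u₂^2))) - (1 - Real.exp (α * (u₁ - u₁^2))) with hEu
  set Ev : ℝ := (1 - Real.exp (α * (v₂ - v₂^2))) - (1 - Real.exp (α * (v₁ - v₁^2))) with hEv
  have hexpand : C u₂ v₂ - C u₁ v₂ - C u₂ v₁ + C u₁ v₁
      = (u₂ - u₁) * (v₂ - v₁) + δ * Eu * Ev := by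
    rw [hC, hC, hC, hC]; ring
  have hEu' : |Eu| ≤ |α| * (u₂ - u₁) := by
    have := lip α hα2 hu₁ hu₂
    rwa [abs_of_nonneg (by linarith : (0:ℝ) ≤ u₂ - u₁)] at this
  have hEv' : |Ev| ≤ |α| * (v₂ - v₁) := by
    have := lip α hα2 hv₁ hv₂
    rwa [abs_of_nonneg (by linarith : (0:ℝ) ≤ v₂ - v₁)] at this
  have hα2pos : (0:ℝ) < α^2 := by positivity
  have hdu : (0:ℝ) ≤ u₂ - u₁ := by linarith
  have hdv : (0:ℝ) ≤ v₂ - v₁ := by linarith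
  have h1 : |δ * Eu * Ev| ≤ (1/α^2) * (|α| * (u₂ - u₁)) * (|α| * (v₂ - v₁)) := by
    rw [abs_mul, abs_mul]
    have h2 : |δ| * |Eu| ≤ (1/α^2) * (|α| * (u₂ - u₁)) :=
      mul_le_mul hδ hEu' (abs_nonneg _) (by positivity)
    exact mul_le_mul h2 hEv' (abs_nonneg _) (by positivity)
  have h3 : (1/α^2) * (|α| * (u₂ - u₁)) * (|α| * (v₂ - v₁)) = (u₂ - u₁) * (v₂ - v₁) := by
    rw [show (1/α^2) * (|α| * (u₂ - u₁)) * (|α| * (v₂ - v₁))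
        = |α|^2 * ((u₂ - u₁) * (v₂ - v₁)) / α^2 by ring, sq_abs]
    field_simp
  rw [h3] at h1
  have h5 := neg_abs_le (δ * Eu * Ev)
  rw [hexpand]
  linarith
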